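/- Let X be the solution of the recursive distributional equation X =_d √U·X + √U·(1−√U). Then P(0 ≤ X ≤ 1) = 1. -/

import Mathlib

open MeasureTheory ENNReal

noncomputable section

/-- The uniform distribution on `[0,1]`. -/
def unif : Measure ℝ := volume.restrict (Set.Icc 0 1)

/-- The map `(x, u) ↦ √u·x + √u·(1 − √u)`. -/
def rdeMap (q : ℝ × ℝ) : ℝ :=
  Real.sqrt q.2 * q.1 + Real.sqrt q.2 * (1 - Real.sqrt q.2)

/-- `μ` is a (probability) solution of the recursive distributional equation
`X =_d √U·X + √U·(1 − √U)` with `X, U` independent and `U` uniform on `[0,1]`. -/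
def IsRDESolution (μ : Measure ℝ) : Prop :=
  IsProbabilityMeasure μ ∧ Measure.map rdeMap (μ.prod unif) = μ

lemma measurable_rdeMap : Measurable rdeMap := by
  have : Continuous rdeMap := by
    unfold rdeMap
    fun_prop
  exact this.measurable

instance : IsProbabilityMeasure unif := by
  constructor
  simp [unif, Real.volume_Icc]

lemma unif_compl : unif (Set.Icc (0:ℝ) 1)ᶜ = 0 := by
  rw [unif, Measure.restrict_apply (measurableSet_Icc.compl)]
  simp

lemma unif_Icc_quarter : unif (Set.Icc (0:ℝ) (1/4)) = 1/4 := by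
  rw [unif, Measure.restrict_apply measurableSet_Icc]
  rw [Set.inter_eq_left.mpr (Set.Icc_subset_Icc le_rfl (by norm_num))]
  rw [Real.volume_Icc]
  norm_num [ENNReal.ofReal_div_of_pos]

lemma unif_Ioc_quarter : unif (Set.Ioc (1/4 : ℝ) 1) = 3/4 := by
  rw [unif, Measure.restrict_apply measurableSet_Ioc]
  rw [Set.inter_eq_left.mpr (Set.Ioc_subset_Icc_self.trans (Set.Icc_subset_Icc (by norm_num) le_rfl))]
  rw [Real.volume_Ioc]
  norm_num [ENNReal.ofReal_div_of_pos]

lemma ennreal_cancel {a b : ℝ≥0∞} (ha : a ≤ 1) (h : a ≤ 1/4 * b + 3/4 * a) : a ≤ b := by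
  have hfin : (3/4 : ℝ≥0∞) * a ≠ ⊤ := by
    apply ne_top_of_le_ne_top (b := (3/4 : ℝ≥0∞) * 1)
    · simp [ENNReal.div_eq_top]
    · exact mul_le_mul_right ha _
  have ha' : a = 1/4 * a + 3/4 * a := by
    rw [← add_mul, ENNReal.div_add_div_same, show (1:ℝ≥0∞)+3 = 4 by norm_num,
      ENNReal.div_self (by norm_num) (by norm_num), one_mul]
  have h2 : (1/4 : ℝ≥0∞) * a ≤ 1/4 * b :=
    (ENNReal.add_le_add_iff_right hfin).mp (ha'.symm.trans_le h)
  exact (ENNReal.mul_le_mul_iff_right (by norm_num) (by simp [ENNReal.div_eq_top])).mp h2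

lemma sqrt_quarter : Real.sqrt (1/4) = 1/2 := by
  rw [show (1/4:ℝ) = (1/2)^2 by norm_num, Real.sqrt_sq (by norm_num)]

section main
variable (μ : Measure ℝ) (hμ : IsRDESolution μ)
include hμ

lemma preimage_eq (s : Set ℝ) (hs : MeasurableSet s) :
    μ s = (μ.prod unif) (rdeMap ⁻¹' s) := by
  conv_lhs => rw [← hμ.2]
  rw [Measure.map_apply measurable_rdeMap hs]

lemma step_pos (t : ℝ) (ht : 1 ≤ t) : μ (Set.Ioi t) ≤ μ (Set.Ioi (t + 1/2)) := by
  haveI : IsProbabilityMeasure μ := hμ.1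
  have hsub : rdeMap ⁻¹' Set.Ioi t ⊆
      (Set.Ioi (t+1/2) ×ˢ Set.Icc 0 (1/4)) ∪ (Set.Ioi t ×ˢ Set.Ioc (1/4) 1)
        ∪ (Set.univ ×ˢ (Set.Icc (0:ℝ) 1)ᶜ) := by
    rintro ⟨x, u⟩ h
    simp only [Set.mem_preimage, Set.mem_Ioi, rdeMap] at h
    by_cases hu : u ∈ Set.Icc (0:ℝ) 1
    · left
      set s := Real.sqrt u with hs
      have hs0 : 0 ≤ s := Real.sqrt_nonneg u
      have hs1 : s ≤ 1 := Real.sqrt_le_one.mpr hu.2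
      have hspos : 0 < s := by
        rcases hs0.lt_or_eq with h' | h'
        · exact h'
        · exfalso; rw [← h'] at h; simp at h; linarith
      by_cases hu4 : u ≤ 1/4
      · have hs2 : s ≤ 1/2 := by
          rw [hs, ← sqrt_quarter]; exact Real.sqrt_le_sqrt hu4
        refine Or.inl ⟨?_, hu.1, hu4⟩
        simp only [Set.mem_Ioi]
        nlinarith [mul_nonneg (sub_nonneg.mpr hs2) (sub_nonneg.mpr ht)]
      · refine Or.inr ⟨?_, lt_of_not_ge hu4, hu.2⟩
        simp only [Set.mem_Ioi]
        nlinarith [mul_nonneg (sub_nonneg.mpr hs1) (sub_nonneg.mpr (hs1.trans ht))]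
    · exact Or.inr ⟨Set.mem_univ x, hu⟩
  have hb : μ (Set.Ioi t) ≤ 1/4 * μ (Set.Ioi (t + 1/2)) + 3/4 * μ (Set.Ioi t) := by
    calc μ (Set.Ioi t) = (μ.prod unif) (rdeMap ⁻¹' Set.Ioi t) :=
          preimage_eq μ hμ _ measurableSet_Ioi
      _ ≤ (μ.prod unif) ((Set.Ioi (t+1/2) ×ˢ Set.Icc 0 (1/4)) ∪ (Set.Ioi t ×ˢ Set.Ioc (1/4) 1)
            ∪ (Set.univ ×ˢ (Set.Icc (0:ℝ) 1)ᶜ)) := measure_mono hsub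
      _ ≤ (μ.prod unif) (Set.Ioi (t+1/2) ×ˢ Set.Icc 0 (1/4))
            + (μ.prod unif) (Set.Ioi t ×ˢ Set.Ioc (1/4) 1)
            + (μ.prod unif) (Set.univ ×ˢ (Set.Icc (0:ℝ) 1)ᶜ) :=
        le_trans (measure_union_le _ _) (by gcongr; exact measure_union_le _ _)
      _ = 1/4 * μ (Set.Ioi (t + 1/2)) + 3/4 * μ (Set.Ioi t) := by
          rw [Measure.prod_prod, Measure.prod_prod, Measure.prod_prod,
            unif_Icc_quarter, unif_Ioc_quarter, unif_compl]
          ring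
  exact ennreal_cancel prob_le_one hb

lemma step_neg (t : ℝ) (ht : 0 ≤ t) : μ (Set.Iio (-t)) ≤ μ (Set.Iio (-(t + 1/2))) := by
  haveI : IsProbabilityMeasure μ := hμ.1
  have hsub : rdeMap ⁻¹' Set.Iio (-t) ⊆
      (Set.Iio (-(t+1/2)) ×ˢ Set.Icc 0 (1/4)) ∪ (Set.Iio (-t) ×ˢ Set.Ioc (1/4) 1)
        ∪ (Set.univ ×ˢ (Set.Icc (0:ℝ) 1)ᶜ) := by
    rintro ⟨x, u⟩ h
    simp only [Set.mem_preimage, Set.mem_Iio, rdeMap] at h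
    by_cases hu : u ∈ Set.Icc (0:ℝ) 1
    · left
      set s := Real.sqrt u with hs
      have hs0 : 0 ≤ s := Real.sqrt_nonneg u
      have hs1 : s ≤ 1 := Real.sqrt_le_one.mpr hu.2
      have hspos : 0 < s := by
        rcases hs0.lt_or_eq with h' | h'
        · exact h'
        · exfalso; rw [← h'] at h; simp at h; linarith
      by_cases hu4 : u ≤ 1/4
      · have hs2 : s ≤ 1/2 := by
          rw [hs, ← sqrt_quarter]; exact Real.sqrt_le_sqrt hu4
        refine Or.inl ⟨?_, hu.1, hu4⟩
        simp only [Set.mem_Iio]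
        nlinarith [mul_nonneg (sub_nonneg.mpr hs2) ht]
      · refine Or.inr ⟨?_, lt_of_not_ge hu4, hu.2⟩
        simp only [Set.mem_Iio]
        nlinarith [mul_nonneg (sub_nonneg.mpr hs1) ht]
    · exact Or.inr ⟨Set.mem_univ x, hu⟩
  have hb : μ (Set.Iio (-t)) ≤ 1/4 * μ (Set.Iio (-(t + 1/2))) + 3/4 * μ (Set.Iio (-t)) := by
    calc μ (Set.Iio (-t)) = (μ.prod unif) (rdeMap ⁻¹' Set.Iio (-t)) :=
          preimage_eq μ hμ _ measurableSet_Iio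
      _ ≤ (μ.prod unif) ((Set.Iio (-(t+1/2)) ×ˢ Set.Icc 0 (1/4)) ∪ (Set.Iio (-t) ×ˢ Set.Ioc (1/4) 1)
            ∪ (Set.univ ×ˢ (Set.Icc (0:ℝ) 1)ᶜ)) := measure_mono hsub
      _ ≤ (μ.prod unif) (Set.Iio (-(t+1/2)) ×ˢ Set.Icc 0 (1/4))
            + (μ.prod unif) (Set.Iio (-t) ×ˢ Set.Ioc (1/4) 1)
            + (μ.prod unif) (Set.univ ×ˢ (Set.Icc (0:ℝ) 1)ᶜ) :=
        le_trans (measure_union_le _ _) (by gcongr; exact measure_union_le _ _)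
      _ = 1/4 * μ (Set.Iio (-(t + 1/2))) + 3/4 * μ (Set.Iio (-t)) := by
          rw [Measure.prod_prod, Measure.prod_prod, Measure.prod_prod,
            unif_Icc_quarter, unif_Ioc_quarter, unif_compl]
          ring
  exact ennreal_cancel prob_le_one hb

lemma iter_pos : ∀ n : ℕ, μ (Set.Ioi (1:ℝ)) ≤ μ (Set.Ioi (1 + n/2 : ℝ)) := by
  intro n
  induction n with
  | zero => simp
  | succ n ih =>
    refine ih.trans ?_
    have := step_pos μ hμ (1 + n/2) (by have : (0:ℝ) ≤ (n:ℝ) := Nat.cast_nonneg n; linarith)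
    convert this using 3
    · rfl
    push_cast
    ring

lemma iter_neg : ∀ n : ℕ, μ (Set.Iio (0:ℝ)) ≤ μ (Set.Iio (-(n/2) : ℝ)) := by
  intro n
  induction n with
  | zero => simp
  | succ n ih =>
    refine ih.trans ?_
    have := step_neg μ hμ (n/2 : ℝ) (by positivity)
    convert this using 3
    · rfl
    push_cast
    ring

lemma null_pos : μ (Set.Ioi (1:ℝ)) = 0 := by
  haveI : IsProbabilityMeasure μ := hμ.1
  have hanti : Antitone (fun n : ℕ => Set.Ioi (1 + n/2 : ℝ)) := by
    intro m n hmn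
    apply Set.Ioi_subset_Ioi
    have : (m : ℝ) ≤ n := Nat.cast_le.mpr hmn
    linarith
  have hint : ⋂ n : ℕ, Set.Ioi (1 + n/2 : ℝ) = ∅ := by
    ext x
    simp only [Set.mem_iInter, Set.mem_Ioi, Set.mem_empty_iff_false, iff_false, not_forall, not_lt]
    obtain ⟨n, hn⟩ := exists_nat_gt x
    exact ⟨2*n, by push_cast; linarith⟩
  have htend : Filter.Tendsto (μ ∘ fun n : ℕ => Set.Ioi (1 + n/2 : ℝ)) Filter.atTop (nhds 0) := by
    have := tendsto_measure_iInter_atTop (μ := μ)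
      (fun n => (measurableSet_Ioi).nullMeasurableSet) hanti ⟨0, measure_ne_top μ _⟩
    rwa [hint, measure_empty] at this
  have := ge_of_tendsto' htend (fun n => iter_pos μ hμ n)
  exact le_antisymm this (zero_le)

lemma null_neg : μ (Set.Iio (0:ℝ)) = 0 := by
  haveI : IsProbabilityMeasure μ := hμ.1
  have hanti : Antitone (fun n : ℕ => Set.Iio (-(n/2) : ℝ)) := by
    intro m n hmn
    apply Set.Iio_subset_Iio
    have : (m : ℝ) ≤ n := Nat.cast_le.mpr hmn
    linarith
  have hint : ⋂ n : ℕ, Set.Iio (-(n/2) : ℝ) = ∅ := by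
    ext x
    simp only [Set.mem_iInter, Set.mem_Iio, Set.mem_empty_iff_false, iff_false, not_forall, not_lt]
    obtain ⟨n, hn⟩ := exists_nat_gt (-x)
    exact ⟨2*n, by push_cast; linarith⟩
  have htend : Filter.Tendsto (μ ∘ fun n : ℕ => Set.Iio (-(n/2) : ℝ)) Filter.atTop (nhds 0) := by
    have := tendsto_measure_iInter_atTop (μ := μ)
      (fun n => (measurableSet_Iio).nullMeasurableSet) hanti ⟨0, measure_ne_top μ _⟩
    rwa [hint, measure_empty] at this
  have := ge_of_tendsto' htend (fun n => iter_neg μ hμ n)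
  exact le_antisymm this (zero_le)

end main

/-- The solution `X` of the RDE `X =_d √U·X + √U·(1 − √U)` satisfies `P(0 ≤ X ≤ 1) = 1`. -/
theorem rde_support (μ : Measure ℝ) (hμ : IsRDESolution μ) :
    μ (Set.Icc (0 : ℝ) 1) = 1 := by
  haveI : IsProbabilityMeasure μ := hμ.1
  rw [← prob_compl_eq_zero_iff measurableSet_Icc]
  refine le_antisymm ?_ (zero_le)
  have hsub : (Set.Icc (0:ℝ) 1)ᶜ ⊆ Set.Iio 0 ∪ Set.Ioi 1 := by
    intro x hx
    simp only [Set.mem_compl_iff, Set.mem_Icc, not_and_or, not_le] at hx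
    rcases hx with h | h
    · exact Or.inl h
    · exact Or.inr h
  calc μ (Set.Icc (0:ℝ) 1)ᶜ ≤ μ (Set.Iio 0 ∪ Set.Ioi 1) := measure_mono hsub
    _ ≤ μ (Set.Iio 0) + μ (Set.Ioi 1) := measure_union_le _ _
    _ = 0 := by rw [null_neg μ hμ, null_pos μ hμ, add_zero]
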